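/- For every natural number p, eventually in x (as x → ∞): x^(p/(p+1)) < x^(log(log x) / log(log(x+1))) < x. -/
import Mathlib


open Filter Asymptotics

theorem stmt18 (p : ℕ) :
    ∀ᶠ x : ℝ in atTop,
      x ^ ((p : ℝ) / (p + 1)) <
          x ^ (Real.log (Real.log x) / Real.log (Real.log (x + 1))) ∧
        x ^ (Real.log (Real.log x) / Real.log (Real.log (x + 1))) < x :=
  by
  have h1 : Tendsto (fun x : ℝ => Real.log (Real.log x)) atTop atTop :=
    Real.tendsto_log_atTop.comp Real.tendsto_log_atTop
  filter_upwards [h1.eventually_gt_atTop (p : ℝ),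
    eventually_gt_atTop (Real.exp 1), eventually_gt_atTop 1] with x hp hex hx1
  have hx0 : (0 : ℝ) < x := by linarith
  have hlx : 1 < Real.log x := (Real.lt_log_iff_exp_lt hx0).mpr hex
  have hlx1 : Real.log x < Real.log (x + 1) := Real.log_lt_log hx0 (by linarith)
  have hN : (0 : ℝ) < Real.log (Real.log x) := Real.log_pos hlx
  have hD : Real.log (Real.log x) < Real.log (Real.log (x + 1)) :=
    Real.log_lt_log (by linarith) hlx1
  have hD0 : (0 : ℝ) < Real.log (Real.log (x + 1)) := lt_trans hN hD
  -- key bound : log (x+1) ≤ e * log x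
  have he : (1 : ℝ) + 1 < Real.exp 1 := by
    have := Real.add_one_lt_exp (x := 1) one_ne_zero
    linarith
  have hkey : Real.log (x + 1) ≤ Real.exp 1 * Real.log x := by
    have h2 : x + 1 ≤ Real.exp 1 * x := by nlinarith
    calc Real.log (x + 1) ≤ Real.log (Real.exp 1 * x) :=
          Real.log_le_log (by linarith) h2
      _ = 1 + Real.log x := by
          rw [Real.log_mul (Real.exp_ne_zero 1) (ne_of_gt hx0), Real.log_exp]
      _ ≤ Real.exp 1 * Real.log x := by nlinarith
  have hkey2 : Real.log (Real.log (x + 1)) ≤ 1 + Real.log (Real.log x) := by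
    calc Real.log (Real.log (x + 1)) ≤ Real.log (Real.exp 1 * Real.log x) :=
          Real.log_le_log (by linarith) hkey
      _ = 1 + Real.log (Real.log x) := by
          rw [Real.log_mul (Real.exp_ne_zero 1) (ne_of_gt (by linarith)), Real.log_exp]
  have hlow : (p : ℝ) / (p + 1) < Real.log (Real.log x) / Real.log (Real.log (x + 1)) := by
    rw [div_lt_div_iff₀ (by positivity) hD0]
    nlinarith
  have hhigh : Real.log (Real.log x) / Real.log (Real.log (x + 1)) < 1 :=
    (div_lt_one hD0).mpr hD
  constructor
  · exact (Real.rpow_lt_rpow_left_iff hx1).mpr hlow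
  · have := (Real.rpow_lt_rpow_left_iff hx1).mpr hhigh
    rwa [Real.rpow_one] at this
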